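/- For every n ≥ 1, the number of spanning trees of the complete graph on n+1 vertices is (n+1)^{n−1}. -/

import Mathlib

set_option linter.unusedSectionVars false
namespace Cayley
open Function

variable {V : Type*} [Fintype V] [DecidableEq V]

/-- `f` is a forest function rooted into `Z`: `Z` is fixed pointwise and every
trajectory eventually enters `Z`. -/
def IsForest (Z : Finset V) (f : V → V) : Prop :=
  (∀ z ∈ Z, f z = z) ∧ ∀ v, ∃ k, f^[k] v ∈ Z

lemma iter_mem {Z : Finset V} {f : V → V} (hZ : ∀ z ∈ Z, f z ∈ Z) {v : V}
    (hv : v ∈ Z) (k : ℕ) : f^[k] v ∈ Z := by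
  induction k with
  | zero => exact hv
  | succ k ih => rw [Function.iterate_succ_apply']; exact hZ _ ih

lemma mem_of_periodic {Z : Finset V} {f : V → V} (hZ : ∀ z ∈ Z, f z ∈ Z)
    {v : V} {k c : ℕ} (hk : f^[k] v ∈ Z) (hc : 0 < c) (hcv : f^[c] v = v) :
    v ∈ Z := by
  have hmul : f^[c * k] v = v := by
    rw [Function.iterate_mul]
    exact Function.iterate_fixed hcv k
  have hle : k ≤ c * k := Nat.le_mul_of_pos_left k hc
  have : f^[c * k] v ∈ Z := by
    have := iter_mem hZ hk (c * k - k)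
    rwa [← Function.iterate_add_apply, Nat.sub_add_cancel hle] at this
  rwa [hmul] at this

lemma hit_transfer {Z : Finset V} {f g : V → V} (hfg : ∀ v ∉ Z, g v = f v) :
    ∀ (k : ℕ) (v : V), f^[k] v ∈ Z → ∃ j, g^[j] v ∈ Z := by
  intro k
  induction k with
  | zero => exact fun v hv => ⟨0, hv⟩
  | succ k ih =>
    intro v hv
    by_cases h : v ∈ Z
    · exact ⟨0, h⟩
    · rw [Function.iterate_succ_apply] at hv
      obtain ⟨j, hj⟩ := ih (f v) hv
      exact ⟨j + 1, by rwa [Function.iterate_add_apply, Function.iterate_one, hfg v h]⟩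

/-- iterates of a conjugated map. -/
lemma conj_iterate (π : Equiv.Perm V) (f : V → V) (k : ℕ) (v : V) :
    (fun x => π (f (π.symm x)))^[k] v = π (f^[k] (π.symm v)) := by
  induction k generalizing v with
  | zero => simp
  | succ k ih =>
    rw [Function.iterate_succ_apply, ih]
    simp [Function.iterate_succ_apply]

lemma IsForest.conj {b : V} {f : V → V} (hf : IsForest {b} f) (π : Equiv.Perm V) :
    IsForest {π b} (fun x => π (f (π.symm x))) := by
  constructor
  · intro z hz
    rw [Finset.mem_singleton] at hz
    subst hz
    simp [hf.1 b (Finset.mem_singleton_self b)]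
  · intro v
    obtain ⟨k, hk⟩ := hf.2 (π.symm v)
    rw [Finset.mem_singleton] at hk
    exact ⟨k, by rw [conj_iterate, hk]; simp⟩

noncomputable def cyc (f : V → V) : Finset V :=
  (Set.toFinite {v | ∃ c, 0 < c ∧ f^[c] v = v}).toFinset

lemma mem_cyc {f : V → V} {v : V} : v ∈ cyc f ↔ ∃ c, 0 < c ∧ f^[c] v = v := by
  simp [cyc, Set.Finite.mem_toFinset]

lemma cyc_closed {f : V → V} {v : V} (hv : v ∈ cyc f) : f v ∈ cyc f := by
  rw [mem_cyc] at hv ⊢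
  obtain ⟨c, hc, hcv⟩ := hv
  exact ⟨c, hc, by rw [← Function.iterate_succ_apply, Function.iterate_succ_apply', hcv]⟩

lemma reach_cyc (f : V → V) (v : V) : ∃ k, f^[k] v ∈ cyc f := by
  obtain ⟨i, j, hij, hmap⟩ := Finite.exists_ne_map_eq_of_infinite (fun i : ℕ => f^[i] v)
  rcases Ne.lt_or_gt hij with h | h
  · refine ⟨i, mem_cyc.2 ⟨j - i, by omega, ?_⟩⟩
    rw [← Function.iterate_add_apply, Nat.sub_add_cancel h.le]
    exact hmap.symm
  · refine ⟨j, mem_cyc.2 ⟨i - j, by omega, ?_⟩⟩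
    rw [← Function.iterate_add_apply, Nat.sub_add_cancel h.le]
    exact hmap

lemma cyc_inj {f : V → V} {a b : V} (ha : a ∈ cyc f) (hb : b ∈ cyc f)
    (h : f a = f b) : a = b := by
  rw [mem_cyc] at ha hb
  obtain ⟨c, hc, hca⟩ := ha
  obtain ⟨d, hd, hdb⟩ := hb
  have hca' : f^[c * d] a = a := by rw [Function.iterate_mul]; exact Function.iterate_fixed hca d
  have hdb' : f^[c * d] b = b := by
    rw [mul_comm, Function.iterate_mul]; exact Function.iterate_fixed hdb c
  have h1 : 1 ≤ c * d := Nat.one_le_iff_ne_zero.2 (by positivity)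
  calc a = f^[c * d] a := hca'.symm
    _ = f^[c * d - 1] (f a) := by
        rw [← Function.iterate_succ_apply]; congr 1; omega
    _ = f^[c * d - 1] (f b) := by rw [h]
    _ = f^[c * d] b := by rw [← Function.iterate_succ_apply]; congr 1; omega
    _ = b := hdb'

/-- the permutation induced by `f` on its cyclic points. -/
noncomputable def cycPerm (f : V → V) : Equiv.Perm {x // x ∈ cyc f} :=
  Equiv.ofBijective (fun x => ⟨f x.1, cyc_closed x.2⟩)
    ((Finite.injective_iff_bijective).1 (fun a b h => by
      exact Subtype.ext (cyc_inj a.2 b.2 (congrArg Subtype.val h))))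

lemma cycPerm_apply (f : V → V) (x : {x // x ∈ cyc f}) : (cycPerm f x : V) = f x := rfl

/-- Equiv A : functions ≃ Σ (nonempty finset Z), perm Z × forest into Z. -/

def NEF (V : Type*) [Fintype V] [DecidableEq V] := {Z : Finset V // Z.Nonempty}

abbrev SigA (V : Type*) [Fintype V] [DecidableEq V] :=
  Σ Z : NEF V, Equiv.Perm {x // x ∈ Z.1} × {g : V → V // IsForest Z.1 g}

variable [Nonempty V]

noncomputable def toSigA (f : V → V) : SigA V := by
  refine ⟨⟨cyc f, ?_⟩, cycPerm f, ⟨fun v => if v ∈ cyc f then v else f v, ?_, ?_⟩⟩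
  · obtain ⟨k, hk⟩ := reach_cyc f (Classical.arbitrary V)
    exact ⟨_, hk⟩
  · intro z hz; simp [hz]
  · intro v
    obtain ⟨k, hk⟩ := reach_cyc f v
    exact hit_transfer (fun w hw => by simp [hw]) k v hk

noncomputable def ofSigA (x : SigA V) : V → V :=
  fun v => if h : v ∈ x.1.1 then (x.2.1 ⟨v, h⟩ : V) else x.2.2.1 v

lemma cyc_ofSigA (Z : Finset V) (hZne : Z.Nonempty) (σ : Equiv.Perm {x // x ∈ Z})
    (g : V → V) (hg : IsForest Z g) :
    cyc (ofSigA ⟨⟨Z, hZne⟩, σ, ⟨g, hg⟩⟩) = Z := by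
  set f : V → V := ofSigA ⟨⟨Z, hZne⟩, σ, ⟨g, hg⟩⟩ with hf
  have hfz : ∀ z : {x // x ∈ Z}, f z = (σ z : V) := fun z => by
    simp only [hf, ofSigA, z.2, dif_pos, Subtype.coe_eta]
  have hiter : ∀ (k : ℕ) (z : {x // x ∈ Z}), f^[k] z = ((σ ^ k) z : V) := by
    intro k
    induction k with
    | zero => simp
    | succ k ih =>
      intro z
      rw [Function.iterate_succ_apply', ih z, pow_succ']
      simp only [Equiv.Perm.mul_apply]
      exact hfz _
  have hclosed : ∀ z ∈ Z, f z ∈ Z := by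
    intro z hz
    rw [hfz ⟨z, hz⟩]
    exact (σ ⟨z, hz⟩).2
  ext v
  constructor
  · intro hv
    rw [mem_cyc] at hv
    obtain ⟨c, hc, hcv⟩ := hv
    by_contra hvZ
    have hfg : ∀ w ∉ Z, f w = g w := fun w hw => by simp [hf, ofSigA, hw]
    obtain ⟨k, hk⟩ := hg.2 v
    obtain ⟨j, hj⟩ := hit_transfer hfg k v hk
    exact hvZ (mem_of_periodic hclosed hj hc hcv)
  · intro hv
    rw [mem_cyc]
    refine ⟨orderOf σ, orderOf_pos σ, ?_⟩
    have := hiter (orderOf σ) ⟨v, hv⟩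
    rw [pow_orderOf_eq_one] at this
    simpa using this

lemma sigA_ext {Z₁ Z₂ : Finset V} {h₁ : Z₁.Nonempty} {h₂ : Z₂.Nonempty}
    {σ₁ : Equiv.Perm {x // x ∈ Z₁}} {σ₂ : Equiv.Perm {x // x ∈ Z₂}}
    {g₁ g₂ : V → V} {hg₁ : IsForest Z₁ g₁} {hg₂ : IsForest Z₂ g₂}
    (hZ : Z₁ = Z₂)
    (hσ : ∀ v (hv₁ : v ∈ Z₁) (hv₂ : v ∈ Z₂), (σ₁ ⟨v, hv₁⟩ : V) = (σ₂ ⟨v, hv₂⟩ : V))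
    (hg : g₁ = g₂) :
    (⟨⟨Z₁, h₁⟩, σ₁, ⟨g₁, hg₁⟩⟩ : SigA V) = ⟨⟨Z₂, h₂⟩, σ₂, ⟨g₂, hg₂⟩⟩ := by
  subst hZ
  subst hg
  refine Sigma.ext rfl (heq_of_eq ?_)
  refine Prod.ext (Equiv.ext fun z => Subtype.ext ?_) (Subtype.ext rfl)
  exact hσ z z.2 z.2

noncomputable def equivA : (V → V) ≃ SigA V where
  toFun := toSigA
  invFun := ofSigA
  left_inv := by
    intro f
    funext v
    by_cases h : v ∈ cyc f
    · simp only [ofSigA, toSigA, h, dif_pos]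
      rfl
    · simp [ofSigA, toSigA, h]
  right_inv := by
    rintro ⟨⟨Z, hZne⟩, σ, g, hg⟩
    have hZ : cyc (ofSigA ⟨⟨Z, hZne⟩, σ, ⟨g, hg⟩⟩) = Z := cyc_ofSigA Z hZne σ g hg
    set f : V → V := ofSigA ⟨⟨Z, hZne⟩, σ, ⟨g, hg⟩⟩ with hf
    refine sigA_ext hZ (fun v hv₁ hv₂ => ?_) (funext fun v => ?_)
    · rw [cycPerm_apply]
      simp only [hf, ofSigA, hv₂, dif_pos]
    · show (if v ∈ cyc f then v else f v) = g v
      by_cases h : v ∈ Z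
      · rw [if_pos (hZ ▸ h)]
        exact (hg.1 v h).symm
      · rw [if_neg (hZ ▸ h)]
        simp [hf, ofSigA, h]
abbrev SigB (V : Type*) [Fintype V] [DecidableEq V] :=
  Σ Z : NEF V, (Fin Z.1.card ≃ {x // x ∈ Z.1}) × {g : V → V // IsForest Z.1 g}

noncomputable def equivAB : SigA V ≃ SigB V :=
  Equiv.sigmaCongrRight (fun Z =>
    Equiv.prodCongr
      (Equiv.equivCongr (Fintype.equivFinOfCardEq (Fintype.card_coe Z.1)) (Equiv.refl _))
      (Equiv.refl _))

/-- the successor-along-`e` function on `Z`, `g` elsewhere. -/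
noncomputable def succFun (Z : Finset V) (e : Fin Z.card ≃ {x // x ∈ Z}) (g : V → V) :
    V → V :=
  fun v => if h : v ∈ Z then
      (if hi : ((e.symm ⟨v, h⟩ : Fin Z.card) : ℕ) + 1 < Z.card
        then (e ⟨((e.symm ⟨v, h⟩ : Fin Z.card) : ℕ) + 1, hi⟩ : V) else v)
    else g v

section succ

variable {Z : Finset V} {e : Fin Z.card ≃ {x // x ∈ Z}} {g : V → V}

lemma succFun_apply_mem (i : Fin Z.card) :
    succFun Z e g (e i) = if hi : (i : ℕ) + 1 < Z.card
        then (e ⟨(i : ℕ) + 1, hi⟩ : V) else (e i : V) := by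
  have h : ((e i : V) ∈ Z) := (e i).2
  simp only [succFun, dif_pos h, Subtype.coe_eta, Equiv.symm_apply_apply]

lemma succFun_apply_not_mem {v : V} (h : v ∉ Z) : succFun Z e g v = g v := by
  simp [succFun, h]

lemma succFun_root (hk : 0 < Z.card) :
    succFun Z e g (e ⟨Z.card - 1, by omega⟩) = (e ⟨Z.card - 1, by omega⟩ : V) := by
  rw [succFun_apply_mem]
  have : ¬ ((⟨Z.card - 1, by omega⟩ : Fin Z.card) : ℕ) + 1 < Z.card := by simp; omega
  rw [dif_neg this]

lemma succFun_climb (hk : 0 < Z.card) :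
    ∀ (j : ℕ) (i : Fin Z.card), (i : ℕ) + j = Z.card - 1 →
      (succFun Z e g)^[j] (e i) = (e ⟨Z.card - 1, by omega⟩ : V) := by
  intro j
  induction j with
  | zero =>
    intro i hi
    have hieq : i = (⟨Z.card - 1, by omega⟩ : Fin Z.card) := Fin.ext (by simpa using hi)
    simp [hieq]
  | succ j ih =>
    intro i hi
    rw [Function.iterate_succ_apply, succFun_apply_mem]
    have h1 : (i : ℕ) + 1 < Z.card := by omega
    rw [dif_pos h1]
    exact ih ⟨(i : ℕ) + 1, h1⟩ (by simp; omega)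

lemma succFun_climb' (hk : 0 < Z.card) :
    ∀ (i : ℕ) (hi : i < Z.card),
      (succFun Z e g)^[i] (e ⟨0, hk⟩) = (e ⟨i, hi⟩ : V) := by
  intro i
  induction i with
  | zero => simp
  | succ i ih =>
    intro hi
    rw [Function.iterate_succ_apply', ih (by omega), succFun_apply_mem, dif_pos hi]

lemma succFun_forest (hZne : Z.Nonempty) (hg : IsForest Z g) :
    IsForest {(e ⟨Z.card - 1, by
      have := Finset.card_pos.2 hZne; omega⟩ : V)} (succFun Z e g) := by
  have hk : 0 < Z.card := Finset.card_pos.2 hZne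
  constructor
  · intro z hz
    rw [Finset.mem_singleton] at hz
    subst hz
    exact succFun_root hk
  · intro v
    have hreach : ∀ z ∈ Z, ∃ j, (succFun Z e g)^[j] z = (e ⟨Z.card - 1, by omega⟩ : V) := by
      intro z hz
      obtain ⟨i, hi⟩ : ∃ i : Fin Z.card, e i = ⟨z, hz⟩ := ⟨e.symm ⟨z, hz⟩, e.apply_symm_apply _⟩
      have hz2 : (e i : V) = z := congrArg Subtype.val hi
      refine ⟨Z.card - 1 - (i : ℕ), ?_⟩
      rw [← hz2]
      exact succFun_climb hk _ i (by have := i.2; omega)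
    by_cases h : v ∈ Z
    · obtain ⟨j, hj⟩ := hreach v h
      exact ⟨j, Finset.mem_singleton.2 hj⟩
    · obtain ⟨k, hk'⟩ := hg.2 v
      obtain ⟨j, hj⟩ := hit_transfer (fun w hw => succFun_apply_not_mem hw) k v hk'
      obtain ⟨j2, hj2⟩ := hreach _ hj
      refine ⟨j2 + j, Finset.mem_singleton.2 ?_⟩
      rw [Function.iterate_add_apply, hj2]

end succ
lemma IsForest.congr_root {f : V → V} {b c : V} (h : IsForest {b} f) (hbc : b = c) :
    IsForest {c} f := hbc ▸ h

lemma sigB_ext {Z₁ Z₂ : Finset V} {h₁ : Z₁.Nonempty} {h₂ : Z₂.Nonempty}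
    {e₁ : Fin Z₁.card ≃ {x // x ∈ Z₁}} {e₂ : Fin Z₂.card ≃ {x // x ∈ Z₂}}
    {g₁ g₂ : V → V} {hg₁ : IsForest Z₁ g₁} {hg₂ : IsForest Z₂ g₂}
    (hZ : Z₁ = Z₂)
    (he : ∀ (i : ℕ) (hi₁ : i < Z₁.card) (hi₂ : i < Z₂.card),
      (e₁ ⟨i, hi₁⟩ : V) = (e₂ ⟨i, hi₂⟩ : V))
    (hgf : g₁ = g₂) :
    (⟨⟨Z₁, h₁⟩, e₁, ⟨g₁, hg₁⟩⟩ : SigB V) = ⟨⟨Z₂, h₂⟩, e₂, ⟨g₂, hg₂⟩⟩ := by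
  subst hZ
  subst hgf
  refine Sigma.ext rfl (heq_of_eq (Prod.ext (Equiv.ext fun i => Subtype.ext ?_)
    (Subtype.ext rfl)))
  exact he i i.isLt i.isLt

variable (b₀ : V)

/-- forward map of Equiv B -/
noncomputable def toB : SigB V → V × V × {q : V → V // IsForest {b₀} q}
  | ⟨⟨Z, hZne⟩, e, g, hg⟩ =>
    ⟨e ⟨0, Finset.card_pos.2 hZne⟩,
     e ⟨Z.card - 1, by show Z.card - 1 < Z.card; have := Finset.card_pos.2 hZne; omega⟩,
     ⟨fun v => Equiv.swap (e ⟨Z.card - 1, by show Z.card - 1 < Z.card; have := Finset.card_pos.2 hZne; omega⟩ : V) b₀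
        (succFun Z e g
          ((Equiv.swap (e ⟨Z.card - 1, by show Z.card - 1 < Z.card; have := Finset.card_pos.2 hZne; omega⟩ : V) b₀).symm
            v)),
      ((succFun_forest hZne hg).conj _).congr_root (Equiv.swap_apply_left _ _)⟩⟩

section back

variable {p : V → V} {a b : V}

def trajFinset (p : V → V) (a : V) (t : ℕ) : Finset V :=
  (Finset.range (t + 1)).image (fun i => p^[i] a)

lemma mem_trajFinset {t : ℕ} {v : V} :
    v ∈ trajFinset p a t ↔ ∃ i, i ≤ t ∧ p^[i] a = v := by
  simp [trajFinset, Nat.lt_succ_iff]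

lemma traj_injOn (hp : IsForest {b} p) (hex : ∃ k, p^[k] a = b) :
    ∀ i j, i ≤ Nat.find hex → j ≤ Nat.find hex → p^[i] a = p^[j] a → i = j := by
  have key : ∀ i j, i < j → j ≤ Nat.find hex → p^[i] a = p^[j] a → False := by
    intro i j hij hj heq
    have hper : p^[j - i] (p^[i] a) = p^[i] a := by
      rw [← Function.iterate_add_apply]
      rw [show j - i + i = j by omega]
      exact heq.symm
    have hreach : p^[Nat.find hex - i] (p^[i] a) ∈ ({b} : Finset V) := by
      rw [← Function.iterate_add_apply, show Nat.find hex - i + i = Nat.find hex by omega]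
      exact Finset.mem_singleton.2 (Nat.find_spec hex)
    have hclosed : ∀ z ∈ ({b} : Finset V), p z ∈ ({b} : Finset V) := by
      intro z hz
      rw [Finset.mem_singleton] at hz
      rw [hz]
      simp [hp.1 b (Finset.mem_singleton_self b)]
    have := mem_of_periodic hclosed hreach (by omega : 0 < j - i) hper
    rw [Finset.mem_singleton] at this
    exact Nat.find_min hex (by omega : i < Nat.find hex) this
  intro i j hi hj heq
  rcases lt_trichotomy i j with h | h | h
  · exact absurd heq (fun heq => key i j h hj heq)
  · exact h
  · exact absurd heq.symm (fun heq => key j i h hi heq)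

lemma card_traj (hp : IsForest {b} p) (hex : ∃ k, p^[k] a = b) :
    (trajFinset p a (Nat.find hex)).card = Nat.find hex + 1 := by
  rw [trajFinset, Finset.card_image_of_injOn, Finset.card_range]
  intro i hi j hj heq
  rw [Finset.mem_coe, Finset.mem_range, Nat.lt_succ_iff] at hi hj
  exact traj_injOn hp hex i j hi hj heq

noncomputable def trajEquiv (hp : IsForest {b} p) (hex : ∃ k, p^[k] a = b) :
    Fin (trajFinset p a (Nat.find hex)).card ≃ {x // x ∈ trajFinset p a (Nat.find hex)} :=
  (finCongr (card_traj hp hex)).trans <| Equiv.ofBijective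
    (fun i => ⟨p^[(i : ℕ)] a, mem_trajFinset.2 ⟨i, by omega, rfl⟩⟩)
    ((Fintype.bijective_iff_injective_and_card _).2
      ⟨fun i j hij => Fin.ext (traj_injOn hp hex i j (by omega) (by omega)
          (congrArg Subtype.val hij)),
        by rw [Fintype.card_coe, card_traj hp hex, Fintype.card_fin]⟩)

lemma trajEquiv_apply (hp : IsForest {b} p) (hex : ∃ k, p^[k] a = b)
    (i : Fin (trajFinset p a (Nat.find hex)).card) :
    (trajEquiv hp hex i : V) = p^[(i : ℕ)] a := rfl

end back

noncomputable def buildB (p : V → V) (a b : V) (hp : IsForest {b} p)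
    (hex : ∃ k, p^[k] a = b) : SigB V :=
  ⟨⟨trajFinset p a (Nat.find hex), ⟨a, mem_trajFinset.2 ⟨0, by omega, rfl⟩⟩⟩,
    trajEquiv hp hex,
    ⟨fun v => if v ∈ trajFinset p a (Nat.find hex) then v else p v, by
      constructor
      · intro z hz
        simp only at hz
        simp [hz]
      · intro v
        obtain ⟨k, hk⟩ := hp.2 v
        rw [Finset.mem_singleton] at hk
        have hbZ : b ∈ trajFinset p a (Nat.find hex) :=
          mem_trajFinset.2 ⟨Nat.find hex, le_refl _, Nat.find_spec hex⟩
        exact hit_transfer (Z := trajFinset p a (Nat.find hex)) (f := p)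
          (fun w hw => by simp [hw]) k v (by rw [hk]; exact hbZ)⟩⟩

lemma buildB_congr {p₁ p₂ : V → V} {a b : V} {hp₁ : IsForest {b} p₁}
    {hp₂ : IsForest {b} p₂} {hex₁ : ∃ k, p₁^[k] a = b} {hex₂ : ∃ k, p₂^[k] a = b}
    (h : p₁ = p₂) : buildB p₁ a b hp₁ hex₁ = buildB p₂ a b hp₂ hex₂ := by
  subst h
  rfl

/-- backward map of Equiv B -/
noncomputable def ofB : (V × V × {q : V → V // IsForest {b₀} q}) → SigB V
  | ⟨a, b, q, hq⟩ =>
    buildB (fun v => Equiv.swap b b₀ (q ((Equiv.swap b b₀).symm v))) a b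
      ((hq.conj _).congr_root (Equiv.swap_apply_right _ _))
      (by
        obtain ⟨k, hk⟩ := ((hq.conj (Equiv.swap b b₀)).congr_root
          (Equiv.swap_apply_right b b₀) : IsForest {b} _).2 a
        exact ⟨k, Finset.mem_singleton.1 hk⟩)
section rt

variable {Z : Finset V} {e : Fin Z.card ≃ {x // x ∈ Z}} {g : V → V}

lemma succFun_find (hk : 0 < Z.card) (hlast : Z.card - 1 < Z.card)
    (hex : ∃ k, (succFun Z e g)^[k] (e ⟨0, hk⟩ : V) = (e ⟨Z.card - 1, hlast⟩ : V)) :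
    Nat.find hex = Z.card - 1 := by
  rw [Nat.find_eq_iff]
  refine ⟨succFun_climb' hk _ hlast, ?_⟩
  intro j hj hcon
  rw [succFun_climb' hk j (by omega)] at hcon
  have := e.injective (Subtype.coe_injective hcon)
  rw [Fin.mk.injEq] at this
  omega

lemma traj_eq (hk : 0 < Z.card) :
    trajFinset (succFun Z e g) (e ⟨0, hk⟩ : V) (Z.card - 1) = Z := by
  ext v
  rw [mem_trajFinset]
  constructor
  · rintro ⟨i, hi, rfl⟩
    rw [succFun_climb' hk i (by omega)]
    exact (e ⟨i, by omega⟩).2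
  · intro hv
    refine ⟨(e.symm ⟨v, hv⟩ : ℕ), by have := (e.symm ⟨v, hv⟩).isLt; omega, ?_⟩
    rw [succFun_climb' hk _ (e.symm ⟨v, hv⟩).isLt]
    have : (⟨(e.symm ⟨v, hv⟩ : ℕ), (e.symm ⟨v, hv⟩).isLt⟩ : Fin Z.card) = e.symm ⟨v, hv⟩ :=
      Fin.eta _ _
    rw [this, e.apply_symm_apply]

lemma buildB_succFun (hZne : Z.Nonempty) (hg : IsForest Z g)
    (hk : 0 < Z.card) (hlast : Z.card - 1 < Z.card)
    (hp : IsForest {(e ⟨Z.card - 1, hlast⟩ : V)} (succFun Z e g))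
    (hex : ∃ k, (succFun Z e g)^[k] (e ⟨0, hk⟩ : V) = (e ⟨Z.card - 1, hlast⟩ : V)) :
    buildB (succFun Z e g) (e ⟨0, hk⟩ : V) (e ⟨Z.card - 1, hlast⟩ : V) hp hex
      = ⟨⟨Z, hZne⟩, e, ⟨g, hg⟩⟩ := by
  have hfind : Nat.find hex = Z.card - 1 := succFun_find hk hlast hex
  have hZeq : trajFinset (succFun Z e g) (e ⟨0, hk⟩ : V) (Nat.find hex) = Z := by
    rw [hfind]
    exact traj_eq hk
  refine sigB_ext hZeq (fun i hi₁ hi₂ => ?_) (funext fun v => ?_)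
  · rw [trajEquiv_apply]
    exact succFun_climb' hk i hi₂
  · by_cases h : v ∈ Z
    · rw [if_pos (by rw [hZeq]; exact h)]
      exact (hg.1 v h).symm
    · rw [if_neg (by rw [hZeq]; exact h)]
      exact succFun_apply_not_mem h

end rt

lemma toB_buildB {p : V → V} {a b : V} (hp : IsForest {b} p) (hex : ∃ k, p^[k] a = b) :
    toB b₀ (buildB p a b hp hex) =
      ⟨a, b, ⟨fun v => Equiv.swap b b₀ (p ((Equiv.swap b b₀).symm v)),
        (hp.conj _).congr_root (Equiv.swap_apply_left _ _)⟩⟩ := by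
  have hcard : (trajFinset p a (Nat.find hex)).card = Nat.find hex + 1 := card_traj hp hex
  have hb : (trajEquiv hp hex ⟨(trajFinset p a (Nat.find hex)).card - 1, by omega⟩ : V) = b := by
    rw [trajEquiv_apply]
    show p^[(trajFinset p a (Nat.find hex)).card - 1] a = b
    have : (trajFinset p a (Nat.find hex)).card - 1 = Nat.find hex := by omega
    rw [this]
    exact Nat.find_spec hex
  have ha : (trajEquiv hp hex ⟨0, by omega⟩ : V) = a := by
    rw [trajEquiv_apply]
    rfl
  have hsucc : succFun (trajFinset p a (Nat.find hex)) (trajEquiv hp hex)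
      (fun v => if v ∈ trajFinset p a (Nat.find hex) then v else p v) = p := by
    funext w
    by_cases h : w ∈ trajFinset p a (Nat.find hex)
    · obtain ⟨i, hit, hiv⟩ := mem_trajFinset.1 h
      have hi2 : i < (trajFinset p a (Nat.find hex)).card := by omega
      have hie : trajEquiv hp hex ⟨i, hi2⟩ = ⟨w, h⟩ := Subtype.ext (by
        rw [trajEquiv_apply]; exact hiv)
      have hw : w = (trajEquiv hp hex ⟨i, hi2⟩ : V) := by rw [hie]
      rw [hw, succFun_apply_mem]
      by_cases hlt : (i : ℕ) + 1 < (trajFinset p a (Nat.find hex)).card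
      · rw [dif_pos hlt, trajEquiv_apply, trajEquiv_apply]
        show p^[i + 1] a = p (p^[i] a)
        exact Function.iterate_succ_apply' p i a
      · rw [dif_neg hlt, trajEquiv_apply]
        show p^[i] a = p (p^[i] a)
        have hit' : i = Nat.find hex := by omega
        have hwb : p^[i] a = b := by rw [hit']; exact Nat.find_spec hex
        rw [hwb]
        exact (hp.1 b (Finset.mem_singleton_self b)).symm
    · rw [succFun_apply_not_mem h, if_neg h]
  show (⟨_, _, ⟨_, _⟩⟩ : V × V × {q : V → V // IsForest {b₀} q}) = _
  refine Prod.ext ha (Prod.ext hb (Subtype.ext (funext fun v => ?_)))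
  simp only
  rw [hb, hsucc]

noncomputable def equivB : SigB V ≃ V × V × {q : V → V // IsForest {b₀} q} where
  toFun := toB b₀
  invFun := ofB b₀
  left_inv := by
    rintro ⟨⟨Z, hZne⟩, e, g, hg⟩
    have hk : 0 < Z.card := Finset.card_pos.2 hZne
    have hlast : Z.card - 1 < Z.card := by omega
    have hp : IsForest {(e ⟨Z.card - 1, hlast⟩ : V)} (succFun Z e g) :=
      succFun_forest hZne hg
    have hex : ∃ k, (succFun Z e g)^[k] (e ⟨0, hk⟩ : V) = (e ⟨Z.card - 1, hlast⟩ : V) := by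
      obtain ⟨k, hk'⟩ := hp.2 (e ⟨0, hk⟩ : V)
      exact ⟨k, Finset.mem_singleton.1 hk'⟩
    simp only [toB, ofB]
    refine Eq.trans (buildB_congr ?_) (buildB_succFun hZne hg hk hlast hp hex)
    funext v
    simp [Equiv.symm_swap, Equiv.swap_apply_self]
  right_inv := by
    rintro ⟨a, b, q, hq⟩
    simp only [ofB]
    rw [toB_buildB]
    refine Prod.ext rfl (Prod.ext rfl (Subtype.ext (funext fun v => ?_)))
    simp [Equiv.symm_swap, Equiv.swap_apply_self]
/-- The master counting theorem at the function level. -/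
theorem card_forest (b₀ : V) :
    Fintype.card V * (Fintype.card V * Nat.card {q : V → V // IsForest {b₀} q})
      = Fintype.card V ^ Fintype.card V := by
  have h1 : Nat.card (V → V) = Fintype.card V ^ Fintype.card V := by
    rw [Nat.card_eq_fintype_card, Fintype.card_fun]
  have h2 : Nat.card (V → V)
      = Nat.card (V × V × {q : V → V // IsForest {b₀} q}) := by
    refine Nat.card_congr ?_
    exact (equivA.trans equivAB).trans (equivB b₀)
  rw [Nat.card_prod, Nat.card_prod] at h2
  rw [h1, Nat.card_eq_fintype_card] at h2
  exact h2.symm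
open SimpleGraph in
/-- the graph associated to a function: edges `v ~ f v`. -/
def graphOf (f : V → V) : SimpleGraph V := SimpleGraph.fromRel (fun v w => f v = w)

lemma graphOf_adj {f : V → V} {v w : V} :
    (graphOf f).Adj v w ↔ v ≠ w ∧ (f v = w ∨ f w = v) := by
  simp [graphOf, SimpleGraph.fromRel_adj]

section forestGraph

variable {b₀ : V} {f : V → V}

lemma root_closed (hf : IsForest {b₀} f) : ∀ z ∈ ({b₀} : Finset V), f z ∈ ({b₀} : Finset V) := by
  intro z hz
  rw [Finset.mem_singleton] at hz
  rw [hz]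
  simp [hf.1 b₀ (Finset.mem_singleton_self b₀)]

lemma reach_root (hf : IsForest {b₀} f) (v : V) : ∃ k, f^[k] v = b₀ := by
  obtain ⟨k, hk⟩ := hf.2 v
  exact ⟨k, Finset.mem_singleton.1 hk⟩

lemma ne_of_periodic (hf : IsForest {b₀} f) {v : V} {c : ℕ} (hc : 0 < c)
    (hcv : f^[c] v = v) : v = b₀ := by
  obtain ⟨k, hk⟩ := hf.2 v
  exact Finset.mem_singleton.1 (mem_of_periodic (root_closed hf) hk hc hcv)

lemma fix_ne (hf : IsForest {b₀} f) {v : V} (hv : v ≠ b₀) : f v ≠ v := by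
  intro h
  exact hv (ne_of_periodic hf (c := 1) one_pos h)

lemma graphOf_adj_self (hf : IsForest {b₀} f) {v : V} (hv : v ≠ b₀) :
    (graphOf f).Adj v (f v) :=
  graphOf_adj.2 ⟨(fix_ne hf hv).symm, Or.inl rfl⟩

/-- the canonical trajectory walk in `graphOf f` from `v` to the root. -/
noncomputable def trajWalk (hf : IsForest {b₀} f) :
    (k : ℕ) → (v : V) → f^[k] v = b₀ → (graphOf f).Walk v b₀
  | 0, _, h => (SimpleGraph.Walk.nil.copy h.symm rfl)
  | k + 1, v, h =>
    if hv : v = b₀ then SimpleGraph.Walk.nil.copy hv.symm rfl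
    else SimpleGraph.Walk.cons (graphOf_adj_self hf hv)
      (trajWalk hf k (f v) (by rwa [Function.iterate_succ_apply] at h))

lemma trajWalk_succ (hf : IsForest {b₀} f) (k : ℕ) (v : V) (h : f^[k + 1] v = b₀)
    (hv : v ≠ b₀) :
    trajWalk hf (k + 1) v h = SimpleGraph.Walk.cons (graphOf_adj_self hf hv)
      (trajWalk hf k (f v) (by rwa [Function.iterate_succ_apply] at h)) := by
  simp [trajWalk, hv]

lemma trajWalk_support (hf : IsForest {b₀} f) :
    ∀ (k : ℕ) (v : V) (h : f^[k] v = b₀) (x : V),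
      x ∈ (trajWalk hf k v h).support → ∃ i, f^[i] v = x := by
  intro k
  induction k with
  | zero =>
    intro v h x hx
    rw [trajWalk] at hx
    erw [SimpleGraph.Walk.support_copy, SimpleGraph.Walk.support_nil] at hx
    rw [List.mem_singleton] at hx
    exact ⟨0, by rw [hx]; exact h⟩
  | succ k ih =>
    intro v h x hx
    by_cases hv : v = b₀
    · simp only [trajWalk, hv, dif_pos, SimpleGraph.Walk.support_copy,
        SimpleGraph.Walk.support_nil] at hx
      rw [List.mem_singleton] at hx
      exact ⟨0, by simp [hx, hv]⟩
    · rw [trajWalk_succ hf k v h hv, SimpleGraph.Walk.support_cons] at hx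
      rcases List.mem_cons.1 hx with hx | hx
      · exact ⟨0, hx.symm⟩
      · obtain ⟨i, hi⟩ := ih (f v) (by rwa [Function.iterate_succ_apply] at h) x hx
        exact ⟨i + 1, by rwa [Function.iterate_succ_apply]⟩

lemma trajWalk_isPath (hf : IsForest {b₀} f) :
    ∀ (k : ℕ) (v : V) (h : f^[k] v = b₀), (trajWalk hf k v h).IsPath := by
  intro k
  induction k with
  | zero =>
    intro v h
    rw [trajWalk]
    erw [SimpleGraph.Walk.isPath_copy]
    exact SimpleGraph.Walk.IsPath.nil
  | succ k ih =>
    intro v h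
    by_cases hv : v = b₀
    · simp [trajWalk, hv]
    · rw [trajWalk_succ hf k v h hv, SimpleGraph.Walk.cons_isPath_iff]
      refine ⟨ih _ _, fun hmem => ?_⟩
      obtain ⟨i, hi⟩ := trajWalk_support hf k (f v)
        (by rwa [Function.iterate_succ_apply] at h) v hmem
      exact hv (ne_of_periodic hf (c := i + 1) (by omega)
        (by rwa [Function.iterate_succ_apply]))

lemma trajWalk_getVert1 (hf : IsForest {b₀} f) (k : ℕ) (v : V)
    (h : f^[k + 1] v = b₀) (hv : v ≠ b₀) :
    (trajWalk hf (k + 1) v h).getVert 1 = f v := by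
  rw [trajWalk_succ hf k v h hv, SimpleGraph.Walk.getVert_cons_succ,
    SimpleGraph.Walk.getVert_zero]

lemma graphOf_connected (hf : IsForest {b₀} f) : (graphOf f).Connected := by
  rw [SimpleGraph.connected_iff]
  refine ⟨fun u v => ?_, ⟨b₀⟩⟩
  have hr : ∀ w, (graphOf f).Reachable w b₀ := fun w => by
    obtain ⟨k, hk⟩ := reach_root hf w
    exact ⟨trajWalk hf k w hk⟩
  exact (hr u).trans (hr v).symm

/-- height above the root. -/
noncomputable def height (hf : IsForest {b₀} f) (v : V) : ℕ := Nat.find (reach_root hf v)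

lemma height_spec (hf : IsForest {b₀} f) (v : V) : f^[height hf v] v = b₀ :=
  Nat.find_spec (reach_root hf v)

lemma height_parent (hf : IsForest {b₀} f) {v : V} (hv : v ≠ b₀) :
    height hf (f v) + 1 = height hf v := by
  have h1 : height hf v ≠ 0 := fun h0 => hv (by simpa [h0] using height_spec hf v)
  have h2 : height hf (f v) ≤ height hf v - 1 := by
    apply Nat.find_le
    rw [← Function.iterate_succ_apply]
    show f^[height hf v - 1 + 1] v = b₀
    have : height hf v - 1 + 1 = height hf v := by omega
    rw [this]
    exact height_spec hf v
  have h3 : height hf v ≤ height hf (f v) + 1 := by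
    apply Nat.find_le
    rw [Function.iterate_succ_apply]
    exact height_spec hf (f v)
  omega

lemma adj_max_eq (hf : IsForest {b₀} f) {u x : V} (h : (graphOf f).Adj u x)
    (hmax : height hf x ≤ height hf u) : f u = x := by
  obtain ⟨hne, hfu | hfx⟩ := graphOf_adj.1 h
  · exact hfu
  · exfalso
    have hx : x ≠ b₀ := by
      intro hx
      rw [hx] at hfx
      rw [hf.1 b₀ (Finset.mem_singleton_self b₀)] at hfx
      rw [hx] at hne
      exact hne hfx.symm
    have := height_parent hf hx
    rw [hfx] at this
    omega

end forestGraph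
section forestGraph2
open SimpleGraph Walk

variable {b₀ : V} {f : V → V}

lemma graphOf_isAcyclic (hf : IsForest {b₀} f) : (graphOf f).IsAcyclic := by
  intro v c hc
  -- pick a vertex of maximal height on the cycle
  obtain ⟨u, huS, hmax⟩ := Finset.exists_max_image c.support.toFinset (height hf)
    ⟨v, List.mem_toFinset.2 c.start_mem_support⟩
  rw [List.mem_toFinset] at huS
  have hmax' : ∀ x ∈ c.support, height hf x ≤ height hf u := fun x hx =>
    hmax x (List.mem_toFinset.2 hx)
  set c' := c.rotate u huS with hc'def
  have hc' : c'.IsCycle := hc.rotate huS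
  have hsub : ∀ x, x ∈ c'.support → x ∈ c.support := by
    intro x hx
    rw [c'.support_eq_cons] at hx
    rcases List.mem_cons.1 hx with rfl | hx
    · exact huS
    · have := (SimpleGraph.Walk.support_rotate c u huS).mem_iff.1 hx
      rw [c.support_eq_cons]
      exact List.mem_cons_of_mem _ this
  -- decompose the cycle at u
  cases hcc : c' with
  | nil => exact hc'.ne_nil hcc
  | cons hadj q =>
    rename_i x
    have hux : u ≠ x := hadj.ne
    obtain ⟨y, hady, r, hqr⟩ := SimpleGraph.Walk.exists_eq_cons_of_ne hux q.reverse
    have hedges : c'.edges = s(u, x) :: q.edges := by rw [hcc]; rfl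
    have hnodup : c'.edges.Nodup := hc'.isCircuit.isTrail.edges_nodup
    have hyq : s(u, y) ∈ q.edges := by
      have h1 : s(u, y) ∈ q.reverse.edges := by
        rw [hqr, SimpleGraph.Walk.edges_cons]
        exact List.mem_cons_self
      rwa [SimpleGraph.Walk.edges_reverse, List.mem_reverse] at h1
    have hxy : x ≠ y := by
      rintro rfl
      rw [hedges] at hnodup
      exact (List.nodup_cons.1 hnodup).1 hyq
    -- memberships and max heights
    have hxS : x ∈ c'.support := by
      rw [hcc, SimpleGraph.Walk.support_cons]
      exact List.mem_cons_of_mem _ q.start_mem_support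
    have hyS : y ∈ c'.support := by
      have h1 : y ∈ q.reverse.support := by
        rw [hqr, SimpleGraph.Walk.support_cons]
        exact List.mem_cons_of_mem _ r.start_mem_support
      rw [SimpleGraph.Walk.support_reverse, List.mem_reverse] at h1
      rw [hcc, SimpleGraph.Walk.support_cons]
      exact List.mem_cons_of_mem _ h1
    have h1 : f u = x := adj_max_eq hf hadj (hmax' x (hsub _ hxS))
    have h2 : f u = y := adj_max_eq hf hady (hmax' y (hsub _ hyS))
    exact hxy (h1 ▸ h2)

lemma graphOf_isTree (hf : IsForest {b₀} f) : (graphOf f).IsTree :=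
  ⟨graphOf_connected hf, graphOf_isAcyclic hf⟩

end forestGraph2
section edges
open SimpleGraph

variable {b₀ : V} {f : V → V}

lemma graphOf_edgeFinset (hf : IsForest {b₀} f) [Fintype (graphOf f).edgeSet] :
    (graphOf f).edgeFinset = (Finset.univ.erase b₀).image (fun v => s(v, f v)) := by
  ext e
  refine Sym2.ind (fun u w => ?_) e
  rw [mem_edgeFinset, mem_edgeSet]
  constructor
  · intro h
    obtain ⟨hne, h1 | h2⟩ := graphOf_adj.1 h
    · have hu : u ≠ b₀ := by
        intro h'
        rw [h', hf.1 b₀ (Finset.mem_singleton_self b₀)] at h1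
        rw [h'] at hne
        exact hne h1
      exact Finset.mem_image.2 ⟨u, Finset.mem_erase.2 ⟨hu, Finset.mem_univ u⟩, by rw [h1]⟩
    · have hw : w ≠ b₀ := by
        intro h'
        rw [h', hf.1 b₀ (Finset.mem_singleton_self b₀)] at h2
        rw [h'] at hne
        exact hne h2.symm
      exact Finset.mem_image.2 ⟨w, Finset.mem_erase.2 ⟨hw, Finset.mem_univ w⟩,
        by rw [h2, Sym2.eq_swap]⟩
  · intro h
    obtain ⟨z, hz, he⟩ := Finset.mem_image.1 h
    have hzb : z ≠ b₀ := (Finset.mem_erase.1 hz).1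
    rw [← mem_edgeSet, ← he, mem_edgeSet]
    exact graphOf_adj_self hf hzb

lemma graphOf_card_edges (hf : IsForest {b₀} f) [Fintype (graphOf f).edgeSet] :
    (graphOf f).edgeFinset.card = Fintype.card V - 1 := by
  rw [graphOf_edgeFinset hf, Finset.card_image_of_injOn, Finset.card_erase_of_mem
    (Finset.mem_univ b₀), Finset.card_univ]
  intro z hz w hw he
  rw [Finset.mem_coe, Finset.mem_erase] at hz hw
  rw [Sym2.eq_iff] at he
  rcases he with ⟨h1, _⟩ | ⟨h1, h2⟩
  · exact h1
  · exfalso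
    apply hz.1
    refine ne_of_periodic hf (c := 2) (by omega) ?_
    show f (f z) = z
    rw [h2, h1]

end edges

section tree
open SimpleGraph

variable {H : SimpleGraph V}

noncomputable def pathTo (hH : H.IsTree) (b₀ v : V) : H.Walk v b₀ :=
  Classical.choose (hH.existsUnique_path v b₀)

lemma pathTo_isPath (hH : H.IsTree) (b₀ v : V) : (pathTo hH b₀ v).IsPath :=
  (Classical.choose_spec (hH.existsUnique_path v b₀)).1

lemma pathTo_unique (hH : H.IsTree) {b₀ v : V} {p : H.Walk v b₀} (hp : p.IsPath) :
    p = pathTo hH b₀ v :=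
  (Classical.choose_spec (hH.existsUnique_path v b₀)).2 p hp

noncomputable def parent (hH : H.IsTree) (b₀ : V) : V → V :=
  fun v => (pathTo hH b₀ v).getVert 1

lemma pathTo_self (hH : H.IsTree) (b₀ : V) : pathTo hH b₀ b₀ = Walk.nil :=
  (pathTo_unique hH Walk.IsPath.nil).symm

lemma parent_self (hH : H.IsTree) (b₀ : V) : parent hH b₀ b₀ = b₀ := by
  rw [parent, pathTo_self]
  rfl

lemma parent_adj (hH : H.IsTree) {b₀ v : V} (hv : v ≠ b₀) :
    H.Adj v (parent hH b₀ v) := by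
  obtain ⟨w, hadj, q, hq⟩ := Walk.exists_eq_cons_of_ne hv (pathTo hH b₀ v)
  have hw : parent hH b₀ v = w := by
    rw [parent, hq, Walk.getVert_cons_succ, Walk.getVert_zero]
  rw [hw]
  exact hadj

lemma parent_len (hH : H.IsTree) {b₀ v : V} (hv : v ≠ b₀) :
    (pathTo hH b₀ (parent hH b₀ v)).length + 1 = (pathTo hH b₀ v).length := by
  obtain ⟨w, hadj, q, hq⟩ := Walk.exists_eq_cons_of_ne hv (pathTo hH b₀ v)
  have hw : parent hH b₀ v = w := by
    rw [parent, hq, Walk.getVert_cons_succ, Walk.getVert_zero]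
  have hqp : q.IsPath := by
    have := pathTo_isPath hH b₀ v
    rw [hq, Walk.cons_isPath_iff] at this
    exact this.1
  rw [hw, ← pathTo_unique hH hqp, hq]
  simp

lemma parent_forest (hH : H.IsTree) (b₀ : V) : IsForest {b₀} (parent hH b₀) := by
  constructor
  · intro z hz
    rw [Finset.mem_singleton] at hz
    rw [hz]
    exact parent_self hH b₀
  · have key : ∀ (n : ℕ) (v : V), (pathTo hH b₀ v).length = n →
        (parent hH b₀)^[n] v = b₀ := by
      intro n
      induction n using Nat.strong_induction_on with
      | _ n ih =>
        intro v hn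
        by_cases hv : v = b₀
        · rw [hv]
          exact Function.iterate_fixed (parent_self hH b₀) n
        · have hlen := parent_len hH hv
          rw [hn] at hlen
          have hn' : n = (pathTo hH b₀ (parent hH b₀ v)).length + 1 := by omega
          rw [hn', Function.iterate_succ_apply]
          exact ih _ (by omega) _ rfl
    intro v
    exact ⟨(pathTo hH b₀ v).length, Finset.mem_singleton.2 (key _ v rfl)⟩

lemma graphOf_parent (hH : H.IsTree) (b₀ : V) : graphOf (parent hH b₀) = H := by
  classical
  haveI : Fintype H.edgeSet := Fintype.ofFinite _
  haveI : Fintype (graphOf (parent hH b₀)).edgeSet := Fintype.ofFinite _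
  have hle : graphOf (parent hH b₀) ≤ H := by
    intro u w huw
    obtain ⟨hne, h1 | h2⟩ := graphOf_adj.1 huw
    · have hu : u ≠ b₀ := by
        intro h'
        rw [h', parent_self hH b₀] at h1
        rw [h'] at hne
        exact hne h1
      rw [← h1]
      exact parent_adj hH hu
    · have hw : w ≠ b₀ := by
        intro h'
        rw [h', parent_self hH b₀] at h2
        rw [h'] at hne
        exact hne h2.symm
      rw [← h2]
      exact (parent_adj hH hw).symm
  have hsub : (graphOf (parent hH b₀)).edgeFinset ⊆ H.edgeFinset :=
    edgeFinset_subset_edgeFinset.2 hle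
  have hcardH : H.edgeFinset.card + 1 = Fintype.card V := hH.card_edgeFinset
  have hcardG : (graphOf (parent hH b₀)).edgeFinset.card = Fintype.card V - 1 :=
    graphOf_card_edges (parent_forest hH b₀)
  have hfin : (graphOf (parent hH b₀)).edgeFinset = H.edgeFinset :=
    Finset.eq_of_subset_of_card_le hsub (by omega)
  have hset : (graphOf (parent hH b₀)).edgeSet = H.edgeSet := by
    rw [← coe_edgeFinset, ← coe_edgeFinset, hfin]
  exact edgeSet_inj.1 hset

lemma parent_graphOf {b₀ : V} {f : V → V} (hf : IsForest {b₀} f) :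
    parent (graphOf_isTree hf) b₀ = f := by
  funext v
  by_cases hv : v = b₀
  · rw [hv, parent_self]
    exact (hf.1 b₀ (Finset.mem_singleton_self b₀)).symm
  · obtain ⟨k, hk⟩ := reach_root hf v
    cases k with
    | zero => exact absurd hk hv
    | succ k =>
      show (pathTo (graphOf_isTree hf) b₀ v).getVert 1 = f v
      rw [← pathTo_unique (graphOf_isTree hf) (trajWalk_isPath hf (k + 1) v hk)]
      exact trajWalk_getVert1 hf k v hk hv

noncomputable def treeEquiv (b₀ : V) :
    {H : SimpleGraph V // H.IsTree} ≃ {q : V → V // IsForest {b₀} q} where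
  toFun := fun H => ⟨parent H.2 b₀, parent_forest H.2 b₀⟩
  invFun := fun q => ⟨graphOf q.1, graphOf_isTree q.2⟩
  left_inv := fun H => Subtype.ext (graphOf_parent H.2 b₀)
  right_inv := fun q => Subtype.ext (parent_graphOf q.2)

end tree

/-- Cayley's formula, abstract version. -/
theorem card_trees (b₀ : V) :
    Fintype.card V * (Fintype.card V * Nat.card {H : SimpleGraph V // H.IsTree})
      = Fintype.card V ^ Fintype.card V := by
  rw [Nat.card_congr (treeEquiv b₀)]
  exact card_forest b₀
end Cayley

/-- For every `n ≥ 1`, the number of spanning trees of the complete graph on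
`n+1` vertices is `(n+1)^{n−1}`. A spanning tree is identified with a subgraph (on the same
vertex set, i.e. a graph `H ≤ ⊤` on the `n+1` vertices) which is a tree. -/
theorem stmt_15 (n : ℕ) (hn : 1 ≤ n) :
    Nat.card {H : SimpleGraph (Fin (n + 1)) //
        H ≤ (⊤ : SimpleGraph (Fin (n + 1))) ∧ H.IsTree} = (n + 1) ^ (n - 1) := by
  have e1 : {H : SimpleGraph (Fin (n + 1)) // H ≤ ⊤ ∧ H.IsTree}
      ≃ {H : SimpleGraph (Fin (n + 1)) // H.IsTree} :=
    Equiv.subtypeEquivRight (fun H => by simp [le_top])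
  rw [Nat.card_congr e1]
  have h := Cayley.card_trees (V := Fin (n + 1)) 0
  rw [Fintype.card_fin] at h
  have h2 : n + 1 = (n - 1) + 2 := by omega
  have hpow : (n + 1) ^ (n + 1) = (n + 1) * ((n + 1) * (n + 1) ^ (n - 1)) := by
    calc (n + 1) ^ (n + 1) = (n + 1) ^ ((n - 1) + 2) := by rw [← h2]
      _ = (n + 1) ^ (n - 1) * (n + 1) ^ 2 := pow_add _ _ _
      _ = (n + 1) * ((n + 1) * (n + 1) ^ (n - 1)) := by ring
  have hc := h.trans hpow
  have hc2 := Nat.eq_of_mul_eq_mul_left (by omega : 0 < n + 1) hc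
  exact Nat.eq_of_mul_eq_mul_left (by omega : 0 < n + 1) hc2
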